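/- Let σ > 0 and let (μ_n) be a sequence of σ-subgaussian probability measures on ℝ^d converging weakly to a probability measure μ (i.e. ∫ φ dμ_n → ∫ φ dμ for every bounded continuous φ : ℝ^d → ℝ). Then (1) μ is σ-subgaussian, and (2) for every real p ≥ 1, ∫ ‖x‖^p dμ_n(x) → ∫ ‖x‖^p dμ(x) as n → ∞. -/

import Mathlib

open MeasureTheory ENNReal Filter
open scoped RealInnerProductSpace Topology

/-- `μ` is a `σ`-subgaussian probability measure on `ℝ^d`. -/
def IsSubgaussian {d : ℕ} (σ : ℝ) (μ : Measure (EuclideanSpace ℝ (Fin d))) : Prop :=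
  IsProbabilityMeasure μ ∧ ∀ v : EuclideanSpace ℝ (Fin d), ‖v‖ = 1 →
    ∫⁻ x, ENNReal.ofReal (Real.exp (⟪x, v⟫ ^ 2 / σ ^ 2)) ∂μ ≤ 2

section Aux

variable {d : ℕ} {σ : ℝ}

/-- The sum of coordinate-wise subgaussian integrands. -/
noncomputable def gfun (d : ℕ) (σ : ℝ) (x : EuclideanSpace ℝ (Fin d)) : ℝ :=
  ∑ i, Real.exp ((x i) ^ 2 / σ ^ 2)

lemma gfun_nonneg (x : EuclideanSpace ℝ (Fin d)) : 0 ≤ gfun d σ x :=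
  Finset.sum_nonneg fun i _ => (Real.exp_pos _).le

lemma gfun_continuous : Continuous (gfun d σ) := by
  refine continuous_finset_sum _ fun i _ => ?_
  exact Real.continuous_exp.comp
    ((((continuous_apply i).comp (PiLp.continuous_ofLp 2 _)).pow 2).div_const _)

lemma exp_le_gfun (hd : 0 < d) (hσ : 0 < σ) (x : EuclideanSpace ℝ (Fin d)) :
    Real.exp (‖x‖ ^ 2 / (d * σ ^ 2)) ≤ gfun d σ x := by
  have hne : (Finset.univ : Finset (Fin d)).Nonempty := ⟨⟨0, hd⟩, Finset.mem_univ _⟩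
  obtain ⟨i0, -, hi0⟩ := Finset.exists_max_image Finset.univ (fun i => (x i) ^ 2) hne
  have hnorm : ‖x‖ ^ 2 = ∑ i, (x i) ^ 2 := by
    rw [EuclideanSpace.norm_eq, Real.sq_sqrt (Finset.sum_nonneg fun i _ => sq_nonneg _)]
    simp [sq_abs]
  have hsum : ∑ i, (x i) ^ 2 ≤ (d : ℝ) * (x i0) ^ 2 := by
    calc ∑ i, (x i) ^ 2 ≤ ∑ _i : Fin d, (x i0) ^ 2 :=
          Finset.sum_le_sum fun i _ => hi0 i (Finset.mem_univ i)
      _ = (d : ℝ) * (x i0) ^ 2 := by simp [mul_comm]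
  have h1 : ‖x‖ ^ 2 / ((d : ℝ) * σ ^ 2) ≤ (x i0) ^ 2 / σ ^ 2 := by
    rw [hnorm]
    rw [div_le_div_iff₀ (by positivity) (by positivity)]
    nlinarith [mul_le_mul_of_nonneg_right hsum (sq_nonneg σ)]
  calc Real.exp (‖x‖ ^ 2 / (d * σ ^ 2)) ≤ Real.exp ((x i0) ^ 2 / σ ^ 2) := Real.exp_le_exp.2 h1
    _ ≤ gfun d σ x := Finset.single_le_sum (f := fun i => Real.exp ((x i) ^ 2 / σ ^ 2))
        (fun i _ => (Real.exp_pos _).le) (Finset.mem_univ i0)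

lemma lintegral_gfun_le {ν : Measure (EuclideanSpace ℝ (Fin d))} (hν : IsSubgaussian σ ν) :
    ∫⁻ x, ENNReal.ofReal (gfun d σ x) ∂ν ≤ 2 * d := by
  have hmeas : ∀ i : Fin d, Measurable fun x : EuclideanSpace ℝ (Fin d) =>
      ENNReal.ofReal (Real.exp ((x i) ^ 2 / σ ^ 2)) := by
    intro i
    exact (Real.continuous_exp.comp
      ((((continuous_apply i).comp (PiLp.continuous_ofLp 2 _)).pow 2).div_const _)).measurable.ennreal_ofReal
  have h1 : ∀ x : EuclideanSpace ℝ (Fin d), ENNReal.ofReal (gfun d σ x)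
      = ∑ i, ENNReal.ofReal (Real.exp ((x i) ^ 2 / σ ^ 2)) := by
    intro x
    exact ENNReal.ofReal_sum_of_nonneg fun i _ => (Real.exp_pos _).le
  calc ∫⁻ x, ENNReal.ofReal (gfun d σ x) ∂ν
      = ∑ i, ∫⁻ x, ENNReal.ofReal (Real.exp ((x i) ^ 2 / σ ^ 2)) ∂ν := by
        simp_rw [h1]; exact lintegral_finset_sum _ fun i _ => hmeas i
    _ ≤ ∑ _i : Fin d, (2 : ℝ≥0∞) := by
        refine Finset.sum_le_sum fun i _ => ?_
        have := hν.2 (EuclideanSpace.single i (1:ℝ)) (by simp)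
        have hx : ∀ x : EuclideanSpace ℝ (Fin d),
            ⟪x, EuclideanSpace.single i (1:ℝ)⟫ = x i := by
          intro x; rw [EuclideanSpace.inner_single_right]; simp
        simpa [hx] using this
    _ = 2 * d := by simp [mul_comm]

end Aux

lemma subgaussian_of_weak_limit
    {d : ℕ} (σ : ℝ)
    (μn : ℕ → Measure (EuclideanSpace ℝ (Fin d))) (hsub : ∀ n, IsSubgaussian σ (μn n))
    (μ : Measure (EuclideanSpace ℝ (Fin d))) (hμ : IsProbabilityMeasure μ)
    (hweak : ∀ φ : EuclideanSpace ℝ (Fin d) → ℝ, Continuous φ → (∃ C : ℝ, ∀ x, |φ x| ≤ C) →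
      Tendsto (fun n => ∫ x, φ x ∂(μn n)) atTop (𝓝 (∫ x, φ x ∂μ))) :
    IsSubgaussian σ μ := by
  refine ⟨hμ, fun v hv => ?_⟩
  set f : EuclideanSpace ℝ (Fin d) → ℝ := fun x => Real.exp (⟪x, v⟫ ^ 2 / σ ^ 2) with hf
  have hf_cont : Continuous f := by
    exact Real.continuous_exp.comp (((continuous_id.inner continuous_const).pow 2).div_const _)
  have hf_nonneg : ∀ x, 0 ≤ f x := fun x => (Real.exp_pos _).le
  -- truncations
  set φ : ℕ → EuclideanSpace ℝ (Fin d) → ℝ := fun M x => min (f x) M with hφ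
  have hφ_cont : ∀ M, Continuous (φ M) := fun M => hf_cont.min continuous_const
  have hφ_nonneg : ∀ M x, 0 ≤ φ M x := fun M x => le_min (hf_nonneg x) (Nat.cast_nonneg M)
  have hφ_bdd : ∀ M x, |φ M x| ≤ (M : ℝ) := fun M x => by
    rw [abs_of_nonneg (hφ_nonneg M x)]; exact min_le_right _ _
  have key : ∀ M (ν : Measure (EuclideanSpace ℝ (Fin d))), IsSubgaussian σ ν →
      ∫ x, φ M x ∂ν ≤ 2 := by
    intro M ν hν
    have := hν.1
    have hle : ∫⁻ x, ENNReal.ofReal (φ M x) ∂ν ≤ 2 :=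
      le_trans (lintegral_mono fun x => ENNReal.ofReal_le_ofReal (min_le_left _ _)) (hν.2 v hv)
    rw [integral_eq_lintegral_of_nonneg_ae (ae_of_all _ (hφ_nonneg M))
      (hφ_cont M).aestronglyMeasurable]
    calc (∫⁻ x, ENNReal.ofReal (φ M x) ∂ν).toReal ≤ (2 : ℝ≥0∞).toReal :=
        ENNReal.toReal_mono (by simp) hle
      _ = 2 := by simp
  have hμ_le : ∀ M : ℕ, ∫⁻ x, ENNReal.ofReal (φ M x) ∂μ ≤ 2 := by
    intro M
    have htend := hweak (φ M) (hφ_cont M) ⟨M, hφ_bdd M⟩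
    have hlim : ∫ x, φ M x ∂μ ≤ 2 :=
      le_of_tendsto htend (Eventually.of_forall fun n => key M (μn n) (hsub n))
    have hint : Integrable (φ M) μ :=
      Integrable.mono' (integrable_const (M : ℝ)) (hφ_cont M).aestronglyMeasurable
        (ae_of_all _ fun x => by rw [Real.norm_eq_abs]; exact hφ_bdd M x)
    rw [← ofReal_integral_eq_lintegral_ofReal hint (ae_of_all _ (hφ_nonneg M))]
    calc ENNReal.ofReal (∫ x, φ M x ∂μ) ≤ ENNReal.ofReal 2 := ENNReal.ofReal_le_ofReal hlim
      _ = 2 := by norm_num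
  have hptsup : ∀ x, (⨆ M : ℕ, ENNReal.ofReal (φ M x)) = ENNReal.ofReal (f x) := by
    intro x
    refine le_antisymm (iSup_le fun M => ENNReal.ofReal_le_ofReal (min_le_left _ _)) ?_
    obtain ⟨M, hM⟩ := exists_nat_ge (f x)
    have : ENNReal.ofReal (f x) = ENNReal.ofReal (φ M x) := by
      rw [hφ]; simp only [min_eq_left hM]
    rw [this]
    exact le_iSup (fun M => ENNReal.ofReal (φ M x)) M
  calc ∫⁻ x, ENNReal.ofReal (f x) ∂μ = ∫⁻ x, ⨆ M : ℕ, ENNReal.ofReal (φ M x) ∂μ :=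
      lintegral_congr fun x => (hptsup x).symm
    _ = ⨆ M : ℕ, ∫⁻ x, ENNReal.ofReal (φ M x) ∂μ := by
      refine lintegral_iSup (fun M => ((hφ_cont M).measurable).ennreal_ofReal) ?_
      intro M N hMN x
      exact ENNReal.ofReal_le_ofReal (min_le_min le_rfl (Nat.cast_le.2 hMN))
    _ ≤ 2 := iSup_le hμ_le

lemma gfun_integrable {ν : Measure (EuclideanSpace ℝ (Fin d))} (hν : IsSubgaussian σ ν) :
    Integrable (gfun d σ) ν := by
  refine ⟨gfun_continuous.aestronglyMeasurable, ?_⟩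
  rw [hasFiniteIntegral_iff_ofReal (ae_of_all _ gfun_nonneg)]
  refine lt_of_le_of_lt (lintegral_gfun_le hν) ?_
  exact ENNReal.mul_lt_top (by simp) (by simp)

lemma integral_gfun_le {ν : Measure (EuclideanSpace ℝ (Fin d))} (hν : IsSubgaussian σ ν) :
    ∫ x, gfun d σ x ∂ν ≤ 2 * d := by
  rw [integral_eq_lintegral_of_nonneg_ae (ae_of_all _ gfun_nonneg)
    gfun_continuous.aestronglyMeasurable]
  calc (∫⁻ x, ENNReal.ofReal (gfun d σ x) ∂ν).toReal ≤ ((2 : ℝ≥0∞) * d).toReal :=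
      ENNReal.toReal_mono (by finiteness) (lintegral_gfun_le hν)
    _ = 2 * d := by simp

lemma exists_tail_bound {c : ℝ} (hc0 : 0 < c) {p : ℝ} {ε : ℝ} (hε : 0 < ε) :
    ∃ R : ℝ, 0 ≤ R ∧ ∀ t : ℝ, R ≤ t → t ^ p ≤ ε * Real.exp (t ^ 2 / c) := by
  have h1 : Tendsto (fun s : ℝ => s ^ (p / 2) * Real.exp (-(1 / c) * s)) atTop (𝓝 0) :=
    tendsto_rpow_mul_exp_neg_mul_atTop_nhds_zero _ _ (by positivity)
  have h3 : Tendsto (fun t : ℝ => (t ^ 2) ^ (p / 2) * Real.exp (-(1 / c) * t ^ 2))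
      atTop (𝓝 0) := h1.comp (tendsto_pow_atTop two_ne_zero)
  have h4 : ∀ᶠ t : ℝ in atTop,
      (t ^ 2) ^ (p / 2) * Real.exp (-(1 / c) * t ^ 2) < ε := h3.eventually (gt_mem_nhds hε)
  obtain ⟨R₀, hR₀⟩ := (h4.and (eventually_ge_atTop (0:ℝ))).exists_forall_of_atTop
  refine ⟨max R₀ 0, le_max_right _ _, fun t ht => ?_⟩
  have ht0 : (0:ℝ) ≤ t := le_trans (le_max_right _ _) ht
  obtain ⟨hlt, -⟩ := hR₀ t (le_trans (le_max_left _ _) ht)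
  have hpow : (t ^ 2) ^ (p / 2) = t ^ p := by
    rw [← Real.rpow_natCast t 2, ← Real.rpow_mul ht0]
    congr 1
    push_cast
    ring
  have hexp : Real.exp (-(1 / c) * t ^ 2) * Real.exp (t ^ 2 / c) = 1 := by
    rw [← Real.exp_add]
    have : -(1 / c) * t ^ 2 + t ^ 2 / c = 0 := by field_simp; ring
    rw [this, Real.exp_zero]
  have : t ^ p = t ^ p * Real.exp (-(1 / c) * t ^ 2) * Real.exp (t ^ 2 / c) := by
    rw [mul_assoc, hexp, mul_one]
  rw [this]
  rw [hpow] at hlt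
  exact mul_le_mul_of_nonneg_right hlt.le (Real.exp_nonneg _)

/-- If a sequence of `σ`-subgaussian probability measures converges weakly to a
probability measure `μ`, then `μ` is `σ`-subgaussian and all moments `∫ ‖x‖^p`
(for real `p ≥ 1`) converge. -/
theorem subgaussian_weak_limit
    {d : ℕ} (σ : ℝ) (hσ : 0 < σ)
    (μn : ℕ → Measure (EuclideanSpace ℝ (Fin d))) (hsub : ∀ n, IsSubgaussian σ (μn n))
    (μ : Measure (EuclideanSpace ℝ (Fin d))) (hμ : IsProbabilityMeasure μ)
    (hweak : ∀ φ : EuclideanSpace ℝ (Fin d) → ℝ, Continuous φ → (∃ C : ℝ, ∀ x, |φ x| ≤ C) →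
      Tendsto (fun n => ∫ x, φ x ∂(μn n)) atTop (𝓝 (∫ x, φ x ∂μ))) :
    IsSubgaussian σ μ ∧
    ∀ p : ℝ, 1 ≤ p →
      Tendsto (fun n => ∫ x, ‖x‖ ^ p ∂(μn n)) atTop (𝓝 (∫ x, ‖x‖ ^ p ∂μ)) := by
  have hsubμ : IsSubgaussian σ μ := subgaussian_of_weak_limit σ μn hsub μ hμ hweak
  refine ⟨hsubμ, fun p hp => ?_⟩
  rcases Nat.eq_zero_or_pos d with hd | hd
  · subst hd
    have hzero : ∀ x : EuclideanSpace ℝ (Fin 0), ‖x‖ ^ p = (0:ℝ) := by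
      intro x
      have hx : ‖x‖ = 0 := by rw [EuclideanSpace.norm_eq]; simp
      rw [hx, Real.zero_rpow (by linarith : p ≠ 0)]
    simp only [hzero, integral_zero]
    exact tendsto_const_nhds
  -- main case : d ≥ 1
  have hd' : (0:ℝ) < d := by exact_mod_cast hd
  set f : EuclideanSpace ℝ (Fin d) → ℝ := fun x => ‖x‖ ^ p with hfdef
  have hf_cont : Continuous f :=
    continuous_norm.rpow_const fun x => Or.inr (by linarith)
  have hf_nonneg : ∀ x, 0 ≤ f x := fun x => Real.rpow_nonneg (norm_nonneg x) p
  -- domination : for each ε > 0, a truncation level M with good tail bounds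
  have hdom : ∀ ε : ℝ, 0 < ε → ∃ M : ℝ, 0 ≤ M ∧
      ∀ x, f x - min (f x) M ≤ ε * gfun d σ x := by
    intro ε hε
    obtain ⟨R, hR0, hR⟩ := exists_tail_bound (c := (d:ℝ) * σ ^ 2) (by positivity) (p := p) hε
    refine ⟨R ^ p, Real.rpow_nonneg hR0 p, fun x => ?_⟩
    by_cases h : f x ≤ R ^ p
    · rw [min_eq_left h, sub_self]
      exact mul_nonneg hε.le (gfun_nonneg x)
    · push_neg at h
      have hRx : R ≤ ‖x‖ := by
        by_contra hcon
        push_neg at hcon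
        exact absurd (Real.rpow_le_rpow (norm_nonneg x) hcon.le (by linarith)) (not_le.2 h)
      have h1 : f x ≤ ε * Real.exp (‖x‖ ^ 2 / (d * σ ^ 2)) := hR ‖x‖ hRx
      have h2 : Real.exp (‖x‖ ^ 2 / (d * σ ^ 2)) ≤ gfun d σ x := exp_le_gfun hd hσ x
      have h3 : 0 ≤ min (f x) (R ^ p) := le_min (hf_nonneg x) (Real.rpow_nonneg hR0 p)
      nlinarith [h1, mul_le_mul_of_nonneg_left h2 hε.le]
  -- integrability of f
  have hIntf : ∀ ν : Measure (EuclideanSpace ℝ (Fin d)), IsSubgaussian σ ν →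
      Integrable f ν := by
    intro ν hν
    have := hν.1
    obtain ⟨M, hM0, hM⟩ := hdom 1 one_pos
    refine Integrable.mono' ((integrable_const M).add (gfun_integrable hν))
      hf_cont.aestronglyMeasurable (ae_of_all _ fun x => ?_)
    have h1 := hM x
    have h2 : min (f x) M ≤ M := min_le_right _ _
    rw [Real.norm_eq_abs, abs_of_nonneg (hf_nonneg x)]
    simp only [Pi.add_apply]
    nlinarith [gfun_nonneg (σ := σ) x]
  -- integrability of truncations
  have hIntmin : ∀ (M : ℝ), 0 ≤ M → ∀ ν : Measure (EuclideanSpace ℝ (Fin d)),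
      IsSubgaussian σ ν → Integrable (fun x => min (f x) M) ν := by
    intro M hM0 ν hν
    have := hν.1
    refine Integrable.mono' (integrable_const M)
      (hf_cont.min continuous_const).aestronglyMeasurable (ae_of_all _ fun x => ?_)
    rw [Real.norm_eq_abs, abs_of_nonneg (le_min (hf_nonneg x) hM0)]
    exact min_le_right _ _
  -- uniform tail estimate
  have htail : ∀ ε : ℝ, 0 < ε → ∃ M : ℝ, 0 ≤ M ∧
      ∀ ν : Measure (EuclideanSpace ℝ (Fin d)), IsSubgaussian σ ν →
        ∫ x, f x ∂ν - ∫ x, min (f x) M ∂ν ≤ ε := by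
    intro ε hε
    set ε' : ℝ := ε / (2 * d) with hε'def
    have hε' : 0 < ε' := by positivity
    obtain ⟨M, hM0, hM⟩ := hdom ε' hε'
    refine ⟨M, hM0, fun ν hν => ?_⟩
    have hν1 := hν.1
    have hint1 := hIntf ν hν
    have hint2 := hIntmin M hM0 ν hν
    rw [← integral_sub hint1 hint2]
    calc ∫ x, (f x - min (f x) M) ∂ν ≤ ∫ x, ε' * gfun d σ x ∂ν :=
        integral_mono (hint1.sub hint2) ((gfun_integrable hν).const_mul ε') hM
      _ = ε' * ∫ x, gfun d σ x ∂ν := integral_const_mul ε' _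
      _ ≤ ε' * (2 * d) := mul_le_mul_of_nonneg_left (integral_gfun_le hν) hε'.le
      _ = ε := by rw [hε'def]; field_simp
  -- final ε-N argument
  rw [Metric.tendsto_atTop]
  intro ε hε
  obtain ⟨M, hM0, hMtail⟩ := htail (ε / 4) (by positivity)
  have hφb : ∀ x, |min (f x) M| ≤ M := fun x => by
    rw [abs_of_nonneg (le_min (hf_nonneg x) hM0)]; exact min_le_right _ _
  have htendM := hweak (fun x => min (f x) M) (hf_cont.min continuous_const) ⟨M, hφb⟩
  obtain ⟨N, hN⟩ := Metric.tendsto_atTop.1 htendM (ε / 4) (by positivity)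
  refine ⟨N, fun n hn => ?_⟩
  have hNn := hN n hn
  rw [Real.dist_eq] at hNn ⊢
  set A := ∫ x, f x ∂(μn n)
  set A' := ∫ x, min (f x) M ∂(μn n)
  set B := ∫ x, f x ∂μ
  set B' := ∫ x, min (f x) M ∂μ
  have hA'A : A' ≤ A :=
    integral_mono (hIntmin M hM0 _ (hsub n)) (hIntf _ (hsub n)) fun x => min_le_left _ _
  have hB'B : B' ≤ B :=
    integral_mono (hIntmin M hM0 _ hsubμ) (hIntf _ hsubμ) fun x => min_le_left _ _
  have h1 : A - A' ≤ ε / 4 := hMtail _ (hsub n)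
  have h2 : B - B' ≤ ε / 4 := hMtail _ hsubμ
  have habs : |A - B| ≤ |A - A'| + |A' - B'| + |B' - B| := by
    calc |A - B| = |(A - A') + ((A' - B') + (B' - B))| := by ring_nf
      _ ≤ |A - A'| + |(A' - B') + (B' - B)| := abs_add_le _ _
      _ ≤ |A - A'| + (|A' - B'| + |B' - B|) := by gcongr; exact abs_add_le _ _
      _ = |A - A'| + |A' - B'| + |B' - B| := by ring
  rw [abs_of_nonneg (by linarith : (0:ℝ) ≤ A - A')] at habs
  rw [abs_sub_comm B' B, abs_of_nonneg (by linarith : (0:ℝ) ≤ B - B')] at habs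
  linarith
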